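/- Suppose there exists a resolvable Golomb ruler RGR(k,L) with k ≥ 2. Then for every positive integer w with kw ≥ 2L+1, there exists a cyclic resolvable (kw,k)-configuration. -/

import Mathlib

/-- A Golomb ruler: a finite set of integers all of whose differences of
ordered pairs of distinct elements are pairwise distinct. -/
def IsGolombRuler (X : Finset ℤ) : Prop :=
  ∀ a ∈ X, ∀ b ∈ X, ∀ c ∈ X, ∀ d ∈ X,
    a - b = c - d → (a = b ∧ c = d) ∨ (a = c ∧ b = d)

/-- `X` has length `L`: the difference between its maximum and minimum elements is `L`. -/
def HasLength (X : Finset ℤ) (L : ℕ) : Prop :=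
  ∃ m ∈ X, ∃ M ∈ X, (∀ x ∈ X, m ≤ x ∧ x ≤ M) ∧ M - m = (L : ℤ)

/-- The elements of `X` cover all `k` residue classes modulo `k`. -/
def CoversResidues (k : ℕ) (X : Finset ℤ) : Prop :=
  ∀ r : ZMod k, ∃ x ∈ X, (x : ZMod k) = r

/-- A resolvable Golomb ruler RGR(k,L). -/
def IsRGR (k L : ℕ) (X : Finset ℤ) : Prop :=
  X.card = k ∧ IsGolombRuler X ∧ HasLength X L ∧ CoversResidues k X

/-- A symmetric (v,k)-configuration on the point set `ZMod v`: `v` blocks of size `k`,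
no pair of distinct points in more than one block, every point in exactly `k` blocks. -/
def IsConfig (v k : ℕ) (B : Finset (Finset (ZMod v))) : Prop :=
  B.card = v ∧
  (∀ b ∈ B, b.card = k) ∧
  (∀ b₁ ∈ B, ∀ b₂ ∈ B, ∀ x y : ZMod v,
    x ≠ y → x ∈ b₁ → y ∈ b₁ → x ∈ b₂ → y ∈ b₂ → b₁ = b₂) ∧
  (∀ x : ZMod v, (B.filter (fun b => x ∈ b)).card = k)

/-- A parallel class: a set of pairwise disjoint blocks whose union is the point set. -/
def IsParallelClass (v : ℕ) (P : Finset (Finset (ZMod v))) : Prop :=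
  (∀ x : ZMod v, ∃ b ∈ P, x ∈ b) ∧
  (∀ b₁ ∈ P, ∀ b₂ ∈ P, b₁ ≠ b₂ → Disjoint b₁ b₂)

/-- A resolution of the block set `B` into `r` parallel classes. -/
def IsResolution (v r : ℕ) (B : Finset (Finset (ZMod v)))
    (R : Finset (Finset (Finset (ZMod v)))) : Prop :=
  R.card = r ∧
  (∀ P ∈ R, P ⊆ B ∧ IsParallelClass v P) ∧
  (∀ b ∈ B, ∃! P, P ∈ R ∧ b ∈ P)

/-- The resolution is invariant under the translation x ↦ x + 1 (mod v). -/
def CyclicResolution (v : ℕ) (R : Finset (Finset (Finset (ZMod v)))) : Prop :=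
  ∀ P ∈ R, P.image (fun b => b.image (· + 1)) ∈ R

/-- A cyclic resolvable symmetric (v,k)-configuration exists. -/
def ExistsCyclicResolvableConfig (v k : ℕ) : Prop :=
  ∃ (B : Finset (Finset (ZMod v))) (R : Finset (Finset (Finset (ZMod v)))),
    IsConfig v k B ∧ IsResolution v k B R ∧ CyclicResolution v R



/-- Block: translate of the ruler mod `v`. -/
def blkD (v : ℕ) (X : Finset ℤ) (t : ZMod v) : Finset (ZMod v) :=
  X.image (fun x : ℤ => (x : ZMod v) + t)

/-- Parallel class indexed by `j : ZMod k`. -/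
def PD (v k : ℕ) [NeZero v] (hd : k ∣ v) (X : Finset ℤ) (j : ZMod k) :
    Finset (Finset (ZMod v)) :=
  (Finset.univ.filter (fun t => ZMod.castHom hd (ZMod k) t = j)).image (blkD v X)

/-- If a resolvable Golomb ruler RGR(k,L) exists (k ≥ 2), then for every w ≥ 1 with
kw ≥ 2L + 1 there exists a cyclic resolvable (kw,k)-configuration. -/
theorem cyclic_resolvable_config_from_RGR (k L : ℕ) (hk : 2 ≤ k)
    (h : ∃ X : Finset ℤ, IsRGR k L X)
    (w : ℕ) (hw : 1 ≤ w) (hbound : 2 * L + 1 ≤ k * w) :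
    ExistsCyclicResolvableConfig (k * w) k := by
  classical
  obtain ⟨X, hcard, hG, ⟨m, hm, M, hM, hmM, hlen⟩, hres⟩ := h
  haveI : NeZero (k * w) := ⟨by omega⟩
  haveI : NeZero k := ⟨by omega⟩
  set v := k * w with hvdef
  have hd : k ∣ v := hvdef ▸ dvd_mul_right k w
  set π := ZMod.castHom hd (ZMod k) with hπdef
  set blk := blkD v X with hblkdef
  set P := PD v k hd X with hPdef
  have hvL : (2 * (L : ℤ)) < (v : ℤ) := by
    have : (2 * L + 1 : ℕ) ≤ v := hbound
    push_cast at this ⊢; linarith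
  -- bounds on differences
  have hbd : ∀ a ∈ X, ∀ b ∈ X, |a - b| ≤ (L : ℤ) := by
    intro a ha b hb
    obtain ⟨h1, h2⟩ := hmM a ha
    obtain ⟨h3, h4⟩ := hmM b hb
    rw [abs_le]; constructor <;> linarith
  -- the key difference lemma mod v
  have hdiff : ∀ a ∈ X, ∀ b ∈ X, ∀ c ∈ X, ∀ d ∈ X,
      ((a : ZMod v) - b = (c : ZMod v) - d) → (a = b ∧ c = d) ∨ (a = c ∧ b = d) := by
    intro a ha b hb c hc d hd' hEq
    have h0 : (((a - b) - (c - d) : ℤ) : ZMod v) = 0 := by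
      push_cast; rw [sub_eq_zero]; exact hEq
    have hdvd' : (v : ℤ) ∣ ((a - b) - (c - d)) :=
      (ZMod.intCast_zmod_eq_zero_iff_dvd _ v).mp h0
    have habs : |(a - b) - (c - d)| < (v : ℤ) := by
      have h1 := abs_le.mp (hbd a ha b hb)
      have h2 := abs_le.mp (hbd c hc d hd')
      rw [abs_lt]; constructor <;> linarith
    have h00 : (a - b) - (c - d) = 0 := Int.eq_zero_of_abs_lt_dvd hdvd' habs
    exact hG a ha b hb c hc d hd' (by linarith)
  -- injectivity of cast mod v on X
  have hinjv : ∀ a ∈ X, ∀ b ∈ X, ((a : ZMod v) = (b : ZMod v)) → a = b := by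
    intro a ha b hb hEq
    rcases hdiff a ha b hb b hb b hb (by rw [hEq, sub_self]) with ⟨h1, _⟩ | ⟨h1, _⟩
    · exact h1
    · exact h1
  -- injectivity of cast mod k on X
  have hinjk : ∀ a ∈ X, ∀ b ∈ X, ((a : ZMod k) = (b : ZMod k)) → a = b := by
    have himg : X.image (fun x : ℤ => (x : ZMod k)) = Finset.univ := by
      apply Finset.eq_univ_iff_forall.mpr
      intro r
      obtain ⟨x, hx, hxr⟩ := hres r
      exact Finset.mem_image.mpr ⟨x, hx, hxr⟩
    have hinj : Set.InjOn (fun x : ℤ => (x : ZMod k)) X :=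
      Finset.card_image_iff.mp (by rw [himg, Finset.card_univ, ZMod.card, hcard])
    intro a ha b hb hEq
    exact hinj (Finset.mem_coe.mpr ha) (Finset.mem_coe.mpr hb) hEq
  -- block membership
  have hblkmem : ∀ (t : ZMod v) (y : ZMod v),
      y ∈ blk t ↔ ∃ a ∈ X, (a : ZMod v) + t = y := by
    intro t y; rw [hblkdef]; exact Finset.mem_image
  -- block cardinality
  have hblkcard : ∀ t : ZMod v, (blk t).card = k := by
    intro t
    rw [hblkdef]
    unfold blkD
    rw [Finset.card_image_of_injOn, hcard]
    intro a ha b hb hEq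
    exact hinjv a (Finset.mem_coe.mp ha) b (Finset.mem_coe.mp hb)
      (add_right_cancel hEq)
  -- blocks are pairwise distinct
  have hblkinj : Function.Injective blk := by
    intro t t' hEq
    obtain ⟨a, ha, b, hb, hab⟩ := Finset.one_lt_card.mp (by rw [hcard]; omega)
    have h1 : (a : ZMod v) + t ∈ blk t' := by
      rw [← hEq]; exact (hblkmem t _).mpr ⟨a, ha, rfl⟩
    have h2 : (b : ZMod v) + t ∈ blk t' := by
      rw [← hEq]; exact (hblkmem t _).mpr ⟨b, hb, rfl⟩
    obtain ⟨a', ha', hEa⟩ := (hblkmem t' _).mp h1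
    obtain ⟨b', hb', hEb⟩ := (hblkmem t' _).mp h2
    have hx : (a : ZMod v) - b = (a' : ZMod v) - b' := by
      linear_combination hEb - hEa
    rcases hdiff a ha b hb a' ha' b' hb' hx with ⟨h3, _⟩ | ⟨h3, _⟩
    · exact absurd h3 hab
    · rw [← h3] at hEa
      exact (add_left_cancel hEa).symm
  -- a point determines the translate within a pair of blocks
  have hpair : ∀ (t t' x y : ZMod v), x ≠ y → x ∈ blk t → y ∈ blk t →
      x ∈ blk t' → y ∈ blk t' → t = t' := by
    intro t t' x y hxy hx1 hy1 hx2 hy2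
    obtain ⟨a, ha, hEa⟩ := (hblkmem _ _).mp hx1
    obtain ⟨b, hb, hEb⟩ := (hblkmem _ _).mp hy1
    obtain ⟨c, hc, hEc⟩ := (hblkmem _ _).mp hx2
    obtain ⟨d, hd', hEd⟩ := (hblkmem _ _).mp hy2
    have hx0 : (a : ZMod v) - b = (c : ZMod v) - d := by
      linear_combination hEa - hEb - hEc + hEd
    rcases hdiff a ha b hb c hc d hd' hx0 with ⟨h3, _⟩ | ⟨h3, _⟩
    · exact absurd (by rw [← hEa, ← hEb, h3] : x = y) hxy
    · rw [← h3] at hEc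
      rw [← hEa] at hEc
      exact (add_left_cancel hEc).symm
  -- translates containing a fixed point
  have hptfilter : ∀ x : ZMod v,
      Finset.univ.filter (fun t => x ∈ blk t) = X.image (fun a : ℤ => x - (a : ZMod v)) := by
    intro x
    ext t
    simp only [Finset.mem_filter, Finset.mem_univ, true_and, Finset.mem_image]
    constructor
    · intro ht
      obtain ⟨a, ha, hEa⟩ := (hblkmem _ _).mp ht
      exact ⟨a, ha, by rw [← hEa]; ring⟩
    · rintro ⟨a, ha, rfl⟩
      exact (hblkmem _ _).mpr ⟨a, ha, by ring⟩
  -- parallel class membership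
  have hPmem : ∀ (j : ZMod k) (b : Finset (ZMod v)),
      b ∈ P j ↔ ∃ t, π t = j ∧ blk t = b := by
    intro j b
    rw [hPdef]
    unfold PD
    simp only [Finset.mem_image, Finset.mem_filter, Finset.mem_univ, true_and]
    exact Iff.rfl
  -- covering property of parallel classes
  have hPcover : ∀ (j : ZMod k) (x : ZMod v), ∃ t, π t = j ∧ x ∈ blk t := by
    intro j x
    obtain ⟨a, ha, hak⟩ := hres (π x - j)
    refine ⟨x - (a : ZMod v), ?_, ?_⟩
    · rw [map_sub, map_intCast, hak]; ring
    · exact (hblkmem _ _).mpr ⟨a, ha, by ring⟩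
  -- blocks in the same parallel class meeting are equal
  have hPuniq : ∀ (t t' : ZMod v), π t = π t' → ∀ x, x ∈ blk t → x ∈ blk t' → t = t' := by
    intro t t' hππ x hx1 hx2
    obtain ⟨a, ha, hEa⟩ := (hblkmem _ _).mp hx1
    obtain ⟨b, hb, hEb⟩ := (hblkmem _ _).mp hx2
    have h1 : (a : ZMod k) + π t = (b : ZMod k) + π t' := by
      have e1 := congrArg π hEa
      have e2 := congrArg π hEb
      rw [map_add, map_intCast] at e1 e2
      rw [e1, e2]
    rw [hππ] at h1
    have hab := hinjk a ha b hb (add_right_cancel h1)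
    rw [← hab] at hEb
    rw [← hEa] at hEb
    exact (add_left_cancel hEb).symm
  -- blk t's parallel class index is determined
  have hblkclass : ∀ (t : ZMod v) (j : ZMod k), blk t ∈ P j → j = π t := by
    intro t j hmem
    obtain ⟨t', ht', hbt'⟩ := (hPmem j _).mp hmem
    rw [← hblkinj hbt', ht']
  -- P is injective
  have hPinj : Function.Injective P := by
    intro j j' hEq
    have hπt₀ : π ((j.val : ℕ) : ZMod v) = j := by
      rw [map_natCast]; exact ZMod.natCast_rightInverse j
    have hmem : blk ((j.val : ℕ) : ZMod v) ∈ P j :=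
      (hPmem j _).mpr ⟨_, hπt₀, rfl⟩
    rw [hEq] at hmem
    rw [hblkclass _ _ hmem, hπt₀]
  refine ⟨Finset.univ.image blk, Finset.univ.image P, ⟨?_, ?_, ?_, ?_⟩, ⟨?_, ?_, ?_⟩, ?_⟩
  -- B.card = v
  · rw [Finset.card_image_of_injective _ hblkinj, Finset.card_univ, ZMod.card]
  -- blocks have card k
  · intro b hb
    obtain ⟨t, _, rfl⟩ := Finset.mem_image.mp hb
    exact hblkcard t
  -- pair condition
  · intro b₁ hb₁ b₂ hb₂ x y hxy hx1 hy1 hx2 hy2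
    obtain ⟨t, _, rfl⟩ := Finset.mem_image.mp hb₁
    obtain ⟨t', _, rfl⟩ := Finset.mem_image.mp hb₂
    rw [hpair t t' x y hxy hx1 hy1 hx2 hy2]
  -- replication number
  · intro x
    have himgf : (Finset.univ.image blk).filter (fun b => x ∈ b)
        = (Finset.univ.filter (fun t => x ∈ blk t)).image blk := by
      ext b
      simp only [Finset.mem_filter, Finset.mem_image, Finset.mem_univ, true_and]
      constructor
      · rintro ⟨⟨t, rfl⟩, hxb⟩
        exact ⟨t, hxb, rfl⟩
      · rintro ⟨t, hxt, rfl⟩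
        exact ⟨⟨t, rfl⟩, hxt⟩
    rw [himgf, Finset.card_image_of_injective _ hblkinj, hptfilter,
      Finset.card_image_of_injOn, hcard]
    intro a ha b hb hEq
    exact hinjv a (Finset.mem_coe.mp ha) b (Finset.mem_coe.mp hb) (sub_right_injective hEq)
  -- R.card = k
  · rw [Finset.card_image_of_injective _ hPinj, Finset.card_univ, ZMod.card]
  -- each class is a parallel class contained in B
  · intro Pc hPc
    obtain ⟨j, _, rfl⟩ := Finset.mem_image.mp hPc
    refine ⟨?_, ?_, ?_⟩
    · intro b hb
      obtain ⟨t, _, rfl⟩ := (hPmem j b).mp hb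
      exact Finset.mem_image.mpr ⟨t, Finset.mem_univ t, rfl⟩
    · intro x
      obtain ⟨t, ht, hxt⟩ := hPcover j x
      exact ⟨blk t, (hPmem j _).mpr ⟨t, ht, rfl⟩, hxt⟩
    · intro b₁ hb₁ b₂ hb₂ hne
      obtain ⟨t, ht, rfl⟩ := (hPmem j _).mp hb₁
      obtain ⟨t', ht', rfl⟩ := (hPmem j _).mp hb₂
      rw [Finset.disjoint_left]
      intro x hx1 hx2
      exact hne (by rw [hPuniq t t' (by rw [ht, ht']) x hx1 hx2])
  -- each block in exactly one class
  · intro b hb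
    obtain ⟨t, _, rfl⟩ := Finset.mem_image.mp hb
    refine ⟨P (π t), ⟨Finset.mem_image.mpr ⟨π t, Finset.mem_univ _, rfl⟩,
      (hPmem _ _).mpr ⟨t, rfl, rfl⟩⟩, ?_⟩
    rintro Q ⟨hQR, hbQ⟩
    obtain ⟨j, _, rfl⟩ := Finset.mem_image.mp hQR
    rw [hblkclass t j hbQ]
  -- cyclic
  · have hblkshift : ∀ t : ZMod v, (blk t).image (· + 1) = blk (t + 1) := by
      intro t
      rw [hblkdef]
      unfold blkD
      rw [Finset.image_image]
      exact Finset.image_congr (fun x _ => by simp [Function.comp, add_assoc])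
    have hPshift : ∀ j : ZMod k, (P j).image (fun b => b.image (· + 1)) = P (j + 1) := by
      intro j
      ext b
      constructor
      · intro hb
        obtain ⟨b', hb', rfl⟩ := Finset.mem_image.mp hb
        obtain ⟨t, ht, rfl⟩ := (hPmem j b').mp hb'
        rw [hblkshift t]
        exact (hPmem _ _).mpr ⟨t + 1, by rw [map_add, map_one, ht], rfl⟩
      · intro hb
        obtain ⟨t, ht, rfl⟩ := (hPmem _ _).mp hb
        refine Finset.mem_image.mpr ⟨blk (t - 1), (hPmem _ _).mpr ⟨t - 1, ?_, rfl⟩, ?_⟩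
        · rw [map_sub, ht, map_one]; ring
        · rw [hblkshift]; congr 1; ring
    intro Pc hPc
    obtain ⟨j, _, rfl⟩ := Finset.mem_image.mp hPc
    rw [hPshift j]
    exact Finset.mem_image.mpr ⟨j + 1, Finset.mem_univ _, rfl⟩
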